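/- For the binary Hamming code of length n = 2^m − 1, the number A_i of codewords of weight i equals (C(n,i) + n·Δ_i)/(n+1), where Δ_i = C((n−1)/2, ⌊i/2⌋) if i ≡ 0 or 3 (mod 4) and Δ_i = −C((n−1)/2, ⌊i/2⌋) if i ≡ 1 or 2 (mod 4). -/

import Mathlib

set_option maxHeartbeats 1600000

open Finset Polynomial


namespace HammingWE

def chi (c : ZMod 2) : ℤ := if c = 0 then 1 else -1

lemma chi_zero : chi 0 = 1 := rfl
lemma chi_add : ∀ a b : ZMod 2, chi (a + b) = chi a * chi b := by decide
lemma chi_ne (c : ZMod 2) (h : c ≠ 0) : chi c = -1 := by revert h; revert c; decide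
lemma zmod2_ne (c : ZMod 2) (h : c ≠ 0) : c = 1 := by revert h; revert c; decide
lemma zmod2_val_eq (c : ZMod 2) : c.val = if c ≠ 0 then 1 else 0 := by revert c; decide
lemma zmod2_add_one_one (a : ZMod 2) : a + 1 + 1 = a := by revert a; decide

lemma chi_sum {ι : Type*} (s : Finset ι) (f : ι → ZMod 2) :
    chi (∑ v ∈ s, f v) = ∏ v ∈ s, chi (f v) := by
  classical
  induction s using Finset.induction_on with
  | empty => simp [chi_zero]
  | insert a s h ih => rw [Finset.sum_insert h, Finset.prod_insert h, chi_add, ih]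

lemma sum_zmod2 {M : Type*} [AddCommMonoid M] (f : ZMod 2 → M) :
    ∑ c : ZMod 2, f c = f 0 + f 1 := by
  rw [show (univ : Finset (ZMod 2)) = {0, 1} from rfl]
  simp

lemma orth (m : ℕ) (w : Fin m → ZMod 2) :
    ∑ u : Fin m → ZMod 2, chi (∑ j, u j * w j) = if w = 0 then (2 ^ m : ℤ) else 0 := by
  by_cases hw : w = 0
  · simp [hw, chi, Fintype.card_fun]
  · rw [if_neg hw]
    obtain ⟨j0, hj0⟩ : ∃ j0, w j0 ≠ 0 := by
      by_contra h; push_neg at h; exact hw (funext fun j => h j)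
    let e : Fin m → ZMod 2 := Pi.single j0 1
    have he : e = Pi.single j0 1 := rfl
    have key : ∀ u : Fin m → ZMod 2, chi (∑ j, (u + e) j * w j) = - chi (∑ j, u j * w j) := by
      intro u
      have h1 : ∑ j, (u + e) j * w j = (∑ j, u j * w j) + (∑ j, e j * w j) := by
        rw [← Finset.sum_add_distrib]; exact Finset.sum_congr rfl fun j _ => by
          simp [add_mul]
      have h2 : ∑ j, e j * w j = 1 := by
        rw [Finset.sum_eq_single j0]
        · simp [he, zmod2_ne _ hj0]
        · intro j _ hj; simp [he, Pi.single_eq_of_ne hj]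
        · simp
      rw [h1, h2, chi_add]
      have : chi 1 = -1 := rfl
      rw [this]; ring
    have hbij : (∑ u : Fin m → ZMod 2, chi (∑ j, u j * w j))
        = ∑ u : Fin m → ZMod 2, chi (∑ j, (u + e) j * w j) :=
      (Fintype.sum_equiv (Equiv.addRight e) _ _ (fun u => rfl)).symm
    have h3 : (∑ u : Fin m → ZMod 2, chi (∑ j, (u + e) j * w j))
        = -∑ u : Fin m → ZMod 2, chi (∑ j, u j * w j) := by
      rw [← Finset.sum_neg_distrib]
      exact Finset.sum_congr rfl fun u _ => key u
    linarith [hbij.trans h3]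

lemma swap' {α : Type*} [Fintype α] [DecidableEq α] (f : α → ZMod 2 → Polynomial ℤ) :
    ∑ x : α → ZMod 2, ∏ v, f v (x v) = ∏ v, ∑ c, f v c := (Fintype.prod_sum f).symm

lemma key {α : Type*} [Fintype α] [DecidableEq α] (b : α → ZMod 2) :
    ∑ x : α → ZMod 2, (C (∏ v, chi (x v * b v)) * X ^ (∑ v, (x v).val) : Polynomial ℤ)
    = ∏ v, (1 + C (chi (b v)) * X) := by
  have h1 : ∀ v, (1 + C (chi (b v)) * X : Polynomial ℤ)
      = ∑ c : ZMod 2, C (chi (c * b v)) * X ^ (c.val) := by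
    intro v
    rw [sum_zmod2]
    simp [chi, if_pos rfl, ZMod.val_one]
  calc ∑ x : α → ZMod 2, (C (∏ v, chi (x v * b v)) * X ^ (∑ v, (x v).val) : Polynomial ℤ)
      = ∑ x : α → ZMod 2, ∏ v, (C (chi (x v * b v)) * X ^ ((x v).val)) := by
        apply Finset.sum_congr rfl; intro x _
        rw [Finset.prod_mul_distrib, map_prod, Finset.prod_pow_eq_pow_sum]
    _ = ∏ v, ∑ c : ZMod 2, C (chi (c * b v)) * X ^ (c.val) :=
        swap' (fun v c => C (chi (c * b v)) * X ^ (c.val))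
    _ = ∏ v, (1 + C (chi (b v)) * X) := Finset.prod_congr rfl fun v _ => (h1 v).symm

lemma hamming_eq_sum {α : Type*} [Fintype α] [DecidableEq α] (x : α → ZMod 2) :
    hammingNorm x = ∑ v, (x v).val := by
  have : hammingNorm x = (univ.filter fun v => x v ≠ 0).card := rfl
  rw [this, Finset.card_filter]
  exact Finset.sum_congr rfl fun v _ => by rw [zmod2_val_eq]

lemma inner_eq {α : Type*} [Fintype α] [DecidableEq α] (b : α → ZMod 2) (i : ℕ) :
    ∑ x ∈ (univ : Finset (α → ZMod 2)).filter (fun x => hammingNorm x = i), ∏ v, chi (x v * b v)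
    = (((1 - X) ^ ((univ.filter fun v => b v ≠ 0).card)
        * (1 + X) ^ (Fintype.card α - (univ.filter fun v => b v ≠ 0).card) : Polynomial ℤ)).coeff i := by
  set p := (univ.filter fun v => b v ≠ 0).card with hp
  have hsplit : (∏ v, (1 + C (chi (b v)) * X) : Polynomial ℤ)
      = (1 - X) ^ p * (1 + X) ^ (Fintype.card α - p) := by
    rw [← Finset.prod_filter_mul_prod_filter_not univ (fun v => b v ≠ 0)]
    have e1 : ∀ v ∈ univ.filter (fun v => b v ≠ 0), (1 + C (chi (b v)) * X : Polynomial ℤ) = 1 - X := by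
      intro v hv
      rw [chi_ne _ (Finset.mem_filter.mp hv).2]
      simp; ring
    have e2 : ∀ v ∈ univ.filter (fun v => ¬ b v ≠ 0), (1 + C (chi (b v)) * X : Polynomial ℤ) = 1 + X := by
      intro v hv
      have : b v = 0 := by have := (Finset.mem_filter.mp hv).2; tauto
      rw [this]
      simp [chi]
    rw [Finset.prod_congr rfl e1, Finset.prod_congr rfl e2, Finset.prod_const, Finset.prod_const]
    congr 1
    rw [Finset.filter_not, Finset.card_sdiff_of_subset (Finset.filter_subset _ _), Finset.card_univ]
  rw [← hsplit, ← key]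
  rw [finset_sum_coeff]
  rw [Finset.sum_filter]
  apply Finset.sum_congr rfl
  intro x _
  rw [coeff_C_mul, coeff_X_pow, hamming_eq_sum]
  by_cases h : (∑ v, (x v).val) = i
  · rw [if_pos h, if_pos h.symm, mul_one]
  · rw [if_neg h, if_neg (fun hh => h hh.symm), mul_zero]

lemma expand2 (M : ℕ) : ((1 : Polynomial ℤ) - X ^ 2) ^ M
    = ∑ k ∈ range (M + 1), C ((-1) ^ k * (M.choose k : ℤ)) * X ^ (2 * k) := by
  have h : ((1 : Polynomial ℤ) - X ^ 2) = (-X ^ 2) + 1 := by ring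
  rw [h, add_pow]
  refine Finset.sum_congr rfl fun k hk => ?_
  have : (-X ^ 2 : Polynomial ℤ) ^ k = C ((-1 : ℤ) ^ k) * X ^ (2 * k) := by
    rw [neg_pow, ← pow_mul]
    simp [map_pow]
  rw [this]
  simp [C_mul]
  ring

lemma coeffA (M i : ℕ) :
    ((1 - X : Polynomial ℤ) ^ (M + 1) * (1 + X) ^ M).coeff i
    = if i % 4 = 0 ∨ i % 4 = 3 then (M.choose (i / 2) : ℤ) else -(M.choose (i / 2) : ℤ) := by
  have h0 : (1 - X : Polynomial ℤ) ^ (M + 1) * (1 + X) ^ M = (1 - X) * (1 - X ^ 2) ^ M := by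
    have h1 : ((1 : Polynomial ℤ) - X ^ 2) = (1 - X) * (1 + X) := by ring
    rw [h1, mul_pow, pow_succ]
    ring
  rw [h0, expand2, Finset.mul_sum]
  have h2 : ∀ k, ((1 - X : Polynomial ℤ) * (C ((-1) ^ k * (M.choose k : ℤ)) * X ^ (2 * k))).coeff i
      = (-1) ^ k * (M.choose k : ℤ) * ((if i = 2 * k then 1 else 0) - (if i = 2 * k + 1 then 1 else 0)) := by
    intro k
    have : (1 - X : Polynomial ℤ) * (C ((-1) ^ k * (M.choose k : ℤ)) * X ^ (2 * k))
        = C ((-1) ^ k * (M.choose k : ℤ)) * X ^ (2 * k)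
          - C ((-1) ^ k * (M.choose k : ℤ)) * X ^ (2 * k + 1) := by ring
    rw [this, coeff_sub, coeff_C_mul, coeff_C_mul, coeff_X_pow, coeff_X_pow]
    ring
  rw [finset_sum_coeff]
  simp only [h2]
  set j := i / 2 with hj
  rcases Nat.even_or_odd i with ⟨c, hc⟩ | ⟨c, hc⟩
  · have hjc : j = c := by omega
    have hE : ∀ k ∈ range (M + 1),
        (-1 : ℤ) ^ k * (M.choose k : ℤ) * ((if i = 2 * k then 1 else 0) - (if i = 2 * k + 1 then 1 else 0))
        = if k = j then (-1) ^ k * (M.choose k : ℤ) else 0 := by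
      intro k _
      by_cases h : k = j
      · subst h
        rw [if_pos (by omega), if_neg (by omega), if_pos rfl]
        ring
      · rw [if_neg (by omega), if_neg (by omega), if_neg h]
        ring
    rw [Finset.sum_congr rfl hE, Finset.sum_ite_eq' (range (M + 1)) j]
    have hmod : i % 4 = 0 ∨ i % 4 = 3 ↔ j % 2 = 0 := by omega
    by_cases hjM : j ∈ range (M + 1)
    · rw [if_pos hjM]
      by_cases hp : j % 2 = 0
      · rw [if_pos (hmod.mpr hp), (Nat.even_iff.mpr hp).neg_one_pow, one_mul]
      · rw [if_neg (fun h => hp (hmod.mp h)), (Nat.odd_iff.mpr (by omega)).neg_one_pow]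
        ring
    · rw [if_neg hjM]
      have : M.choose j = 0 := Nat.choose_eq_zero_of_lt (by simpa using hjM)
      rw [this]
      simp
  · have hjc : j = c := by omega
    have hE : ∀ k ∈ range (M + 1),
        (-1 : ℤ) ^ k * (M.choose k : ℤ) * ((if i = 2 * k then 1 else 0) - (if i = 2 * k + 1 then 1 else 0))
        = if k = j then -((-1) ^ k * (M.choose k : ℤ)) else 0 := by
      intro k _
      by_cases h : k = j
      · subst h
        rw [if_neg (by omega), if_pos (by omega), if_pos rfl]
        ring
      · rw [if_neg (by omega), if_neg (by omega), if_neg h]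
        ring
    rw [Finset.sum_congr rfl hE, Finset.sum_ite_eq' (range (M + 1)) j]
    have hmod : i % 4 = 0 ∨ i % 4 = 3 ↔ j % 2 = 1 := by omega
    by_cases hjM : j ∈ range (M + 1)
    · rw [if_pos hjM]
      by_cases hp : j % 2 = 1
      · rw [if_pos (hmod.mpr hp), (Nat.odd_iff.mpr hp).neg_one_pow]
        ring
      · rw [if_neg (fun h => hp (hmod.mp h)), (Nat.even_iff.mpr (by omega)).neg_one_pow]
        ring
    · rw [if_neg hjM]
      have : M.choose j = 0 := Nat.choose_eq_zero_of_lt (by simpa using hjM)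
      rw [this]
      simp

lemma coeffB (n i : ℕ) : (((1 - X : Polynomial ℤ) ^ 0 * (1 + X) ^ n)).coeff i = (n.choose i : ℤ) := by
  rw [pow_zero, one_mul, coeff_one_add_X_pow]

lemma card_fiber (m : ℕ) (u : Fin m → ZMod 2) (hu : u ≠ 0) :
    ((univ : Finset (Fin m → ZMod 2)).filter fun w => ¬ (∑ j, u j * w j) = 0).card = 2 ^ (m - 1) := by
  obtain ⟨j0, hj0⟩ : ∃ j0, u j0 ≠ 0 := by
    by_contra h; push_neg at h; exact hu (funext fun j => h j)
  have hm : 1 ≤ m := j0.pos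
  set e : Fin m → ZMod 2 := Pi.single j0 1 with he
  have hee : ∀ w : Fin m → ZMod 2, w + e + e = w := by
    intro w; funext j
    by_cases h : j = j0
    · subst h; simp [he, Pi.single_eq_same, zmod2_add_one_one]
    · simp [he, Pi.single_eq_of_ne h]
  have hdot : ∀ w : Fin m → ZMod 2, (∑ j, u j * (w + e) j) = (∑ j, u j * w j) + 1 := by
    intro w
    have : ∀ j, u j * (w + e) j = u j * w j + u j * e j := fun j => by simp [mul_add]
    rw [Finset.sum_congr rfl fun j _ => this j, Finset.sum_add_distrib]
    congr 1
    rw [Finset.sum_eq_single j0]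
    · simp [he, Pi.single_eq_same, zmod2_ne _ hj0]
    · intro j _ hj; simp [he, Pi.single_eq_of_ne hj]
    · simp
  have hcards : ((univ : Finset (Fin m → ZMod 2)).filter fun w => (∑ j, u j * w j) = 0).card
      = ((univ : Finset (Fin m → ZMod 2)).filter fun w => ¬ (∑ j, u j * w j) = 0).card := by
    apply Finset.card_nbij' (i := fun w => w + e) (j := fun w => w + e)
    · intro w hw
      simp only [Finset.mem_coe, Finset.mem_filter, Finset.mem_univ, true_and] at hw ⊢
      rw [hdot, hw]; decide
    · intro w hw
      simp only [Finset.mem_coe, Finset.mem_filter, Finset.mem_univ, true_and] at hw ⊢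
      rw [hdot]
      have := zmod2_ne _ hw
      rw [this]; decide
    · intro w _; exact hee w
    · intro w _; exact hee w
  have hcardfun : Fintype.card (Fin m → ZMod 2) = 2 ^ m := by
    rw [Fintype.card_fun]
    simp
  have hle : ((univ : Finset (Fin m → ZMod 2)).filter fun w => (∑ j, u j * w j) = 0).card
      ≤ 2 ^ m := by
    rw [← hcardfun, ← Finset.card_univ]
    exact Finset.card_filter_le _ _
  have htot : ((univ : Finset (Fin m → ZMod 2)).filter fun w => (∑ j, u j * w j) = 0).card
      + ((univ : Finset (Fin m → ZMod 2)).filter fun w => ¬ (∑ j, u j * w j) = 0).card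
      = 2 ^ m := by
    rw [Finset.filter_not, Finset.card_sdiff_of_subset (Finset.filter_subset _ _), Finset.card_univ,
      hcardfun]
    exact Nat.add_sub_cancel' hle
  have h2 : 2 ^ m = 2 * 2 ^ (m - 1) := by
    conv_lhs => rw [show m = (m - 1) + 1 from (Nat.succ_pred_eq_of_pos hm).symm]
    rw [pow_succ']
  have hfin : 2 * ((univ : Finset (Fin m → ZMod 2)).filter fun w => ¬ (∑ j, u j * w j) = 0).card
      = 2 * 2 ^ (m - 1) := by
    rw [two_mul]
    nth_rewrite 1 [← hcards]
    rw [htot, h2]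
  exact Nat.eq_of_mul_eq_mul_left (by norm_num) hfin

lemma card_S (m : ℕ) : Fintype.card {f : Fin m → ZMod 2 // f ≠ 0} = 2 ^ m - 1 := by
  have := Fintype.card_subtype_compl (α := Fin m → ZMod 2) (p := fun f => f = 0)
  rw [Fintype.card_subtype_eq (0 : Fin m → ZMod 2), Fintype.card_fun] at this
  simpa using this

lemma card_subtype_fiber (m : ℕ) (u : Fin m → ZMod 2) (hu : u ≠ 0) :
    ((univ : Finset {f : Fin m → ZMod 2 // f ≠ 0}).filter
      fun v => ¬ (∑ j, u j * v.val j) = 0).card = 2 ^ (m - 1) := by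
  rw [← card_fiber m u hu]
  apply Finset.card_bij' (i := fun v _ => v.val)
    (j := fun w hw => ⟨w, by
      intro h0
      simp only [Finset.mem_filter, Finset.mem_univ, true_and] at hw
      apply hw
      rw [h0]
      simp⟩)
  case hi =>
    intro v hv
    simp only [Finset.mem_filter, Finset.mem_univ, true_and] at hv ⊢
    exact hv
  case hj =>
    intro w hw
    simp only [Finset.mem_filter, Finset.mem_univ, true_and] at hw ⊢
    exact hw
  case left_inv => intro v _; rfl
  case right_inv => intro w _; rfl

end HammingWE

open HammingWE

lemma arith (m n : ℕ) (hm : 2 ≤ m) (hn : n = 2 ^ m - 1) :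
    n - 2 ^ (m - 1) = (n - 1) / 2 ∧ 2 ^ (m - 1) = (n - 1) / 2 + 1 := by
  have h1 : (1 : ℕ) ≤ 2 ^ (m - 1) := Nat.one_le_two_pow
  have h2 : 2 ^ m = 2 * 2 ^ (m - 1) := by
    conv_lhs => rw [show m = (m - 1) + 1 by omega]
    rw [pow_succ']
  omega

theorem hamming_code_weight_enumerator (m : ℕ) (hm : 2 ≤ m) (n : ℕ) (hn : n = 2 ^ m - 1)
    (i : ℕ) (hi : i ≤ n)
    (A : ℕ)
    (hA : A = Nat.card {x : {f : Fin m → ZMod 2 // f ≠ 0} → ZMod 2 //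
      (∑ v : {f : Fin m → ZMod 2 // f ≠ 0}, x v • v.val) = 0 ∧ hammingNorm x = i})
    (Δ : ℤ)
    (hΔ : Δ = if i % 4 = 0 ∨ i % 4 = 3 then (((n - 1) / 2).choose (i / 2) : ℤ)
              else -(((n - 1) / 2).choose (i / 2) : ℤ)) :
    ((n : ℤ) + 1) * A = (n.choose i : ℤ) + n * Δ := by
  have h2m1 : (1 : ℕ) ≤ 2 ^ m := Nat.one_le_two_pow
  obtain ⟨harith1, harith2⟩ := arith m n hm hn
  have hcardS : Fintype.card {f : Fin m → ZMod 2 // f ≠ 0} = n := by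
    rw [card_S, hn]
  have hA' : A = ((univ : Finset ({f : Fin m → ZMod 2 // f ≠ 0} → ZMod 2)).filter
      (fun x => (∑ v, x v • v.val) = 0 ∧ hammingNorm x = i)).card := by
    rw [hA, Nat.card_eq_fintype_card, Fintype.card_subtype]
  -- bilinearity
  have bilin : ∀ (u : Fin m → ZMod 2) (x : {f : Fin m → ZMod 2 // f ≠ 0} → ZMod 2),
      (∑ j, u j * (∑ v, x v • v.val) j) = ∑ v, x v * (∑ j, u j * v.val j) := by
    intro u x
    have happ : ∀ j, (∑ v, x v • v.val) j = ∑ v, x v * v.val j := by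
      intro j
      rw [Finset.sum_apply]
      exact Finset.sum_congr rfl fun v _ => by simp [Pi.smul_apply, smul_eq_mul]
    calc ∑ j, u j * (∑ v, x v • v.val) j
        = ∑ j, ∑ v, u j * (x v * v.val j) := by
          refine Finset.sum_congr rfl fun j _ => ?_
          rw [happ j, Finset.mul_sum]
      _ = ∑ v, ∑ j, u j * (x v * v.val j) := Finset.sum_comm
      _ = ∑ v, x v * (∑ j, u j * v.val j) := by
          refine Finset.sum_congr rfl fun v _ => ?_
          rw [Finset.mul_sum]
          exact Finset.sum_congr rfl fun j _ => by ring
  have step1 : ∑ x ∈ (univ : Finset ({f : Fin m → ZMod 2 // f ≠ 0} → ZMod 2)).filter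
        (fun x => hammingNorm x = i),
        (if (∑ v, x v • v.val) = 0 then ((2 : ℤ) ^ m) else 0) = (2 : ℤ) ^ m * A := by
    rw [← Finset.sum_filter, Finset.sum_const, Finset.filter_filter]
    have hset : ((univ : Finset ({f : Fin m → ZMod 2 // f ≠ 0} → ZMod 2)).filter
        (fun x => hammingNorm x = i ∧ (∑ v, x v • v.val) = 0))
        = ((univ : Finset ({f : Fin m → ZMod 2 // f ≠ 0} → ZMod 2)).filter
        (fun x => (∑ v, x v • v.val) = 0 ∧ hammingNorm x = i)) := by
      ext x
      simp [and_comm]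
    rw [hset, ← hA', nsmul_eq_mul]
    ring
  have step2 : ∀ x : {f : Fin m → ZMod 2 // f ≠ 0} → ZMod 2,
      (if (∑ v, x v • v.val) = 0 then ((2 : ℤ) ^ m) else 0)
      = ∑ u : Fin m → ZMod 2, ∏ v, chi (x v * (∑ j, u j * v.val j)) := by
    intro x
    rw [← orth m (∑ v, x v • v.val)]
    refine Finset.sum_congr rfl fun u _ => ?_
    rw [bilin u x, chi_sum]
  -- per-u evaluation
  have per_u : ∀ u : Fin m → ZMod 2,
      ∑ x ∈ (univ : Finset ({f : Fin m → ZMod 2 // f ≠ 0} → ZMod 2)).filter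
        (fun x => hammingNorm x = i), ∏ v, chi (x v * (∑ j, u j * v.val j))
      = if u = 0 then (n.choose i : ℤ) else Δ := by
    intro u
    have hie := inner_eq (fun v : {f : Fin m → ZMod 2 // f ≠ 0} => ∑ j, u j * v.val j) i
    beta_reduce at hie
    rw [hie]
    by_cases hu : u = 0
    · rw [if_pos hu]
      subst hu
      have hb : (univ.filter fun v : {f : Fin m → ZMod 2 // f ≠ 0} =>
          (∑ j, (0 : Fin m → ZMod 2) j * v.val j) ≠ 0) = ∅ := by
        apply Finset.filter_false_of_mem
        intro v _
        simp
      rw [hb]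
      simp only [Finset.card_empty, Nat.sub_zero, hcardS]
      exact coeffB n i
    · rw [if_neg hu]
      have hp : (univ.filter fun v : {f : Fin m → ZMod 2 // f ≠ 0} =>
          (∑ j, u j * v.val j) ≠ 0).card = 2 ^ (m - 1) := card_subtype_fiber m u hu
      rw [hp, hcardS, harith1, harith2, coeffA ((n - 1) / 2) i, hΔ]
  -- assemble
  have main : (2 : ℤ) ^ m * A = (n.choose i : ℤ) + n * Δ := by
    rw [← step1]
    rw [Finset.sum_congr rfl fun x _ => step2 x]
    rw [Finset.sum_comm]
    rw [Finset.sum_congr rfl fun u _ => per_u u]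
    rw [← Finset.add_sum_erase _ _ (Finset.mem_univ (0 : Fin m → ZMod 2))]
    rw [if_pos rfl]
    congr 1
    have hconst : ∀ u ∈ (univ : Finset (Fin m → ZMod 2)).erase 0,
        (if u = 0 then (n.choose i : ℤ) else Δ) = Δ := by
      intro u hu
      rw [if_neg (Finset.ne_of_mem_erase hu)]
    rw [Finset.sum_congr rfl hconst, Finset.sum_const, nsmul_eq_mul,
      Finset.card_erase_of_mem (Finset.mem_univ _), Finset.card_univ, Fintype.card_fun]
    congr 1
    have : Fintype.card (ZMod 2) = 2 := by simp
    rw [this, Fintype.card_fin, hn]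
  have hcast : ((2 : ℤ) ^ m) = (n : ℤ) + 1 := by
    have : (n : ℤ) = (2 : ℤ) ^ m - 1 := by
      rw [hn]
      push_cast [h2m1]
      ring
    rw [this]
    ring
  rw [← hcast]
  exact main
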